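/- Let L > 0 and let g : [0,L] → ℝ be an absolutely continuous function with g(0) = g(L) = 0. Then the supremum norm of g satisfies ‖g‖_∞² ≤ (L/π) ∫₀ᴸ (g'(x))² dx. -/

import Mathlib

open MeasureTheory Real Set

lemma cs_interval (a b : ℝ) (hab : a ≤ b) (f : ℝ → ℝ)
    (h1 : IntervalIntegrable f volume a b)
    (h2 : IntervalIntegrable (fun x => f x ^ 2) volume a b) :
    (∫ x in a..b, f x) ^ 2 ≤ (b - a) * ∫ x in a..b, f x ^ 2 := by
  have h1' : IntegrableOn f (Ioc a b) volume := by
    rwa [intervalIntegrable_iff_integrableOn_Ioc_of_le hab] at h1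
  have h2' : IntegrableOn (fun x => f x ^ 2) (Ioc a b) volume := by
    rwa [intervalIntegrable_iff_integrableOn_Ioc_of_le hab] at h2
  set μ := volume.restrict (Ioc a b) with hμ
  have hfin : IsFiniteMeasure μ := by
    constructor
    rw [hμ, Measure.restrict_apply_univ]
    exact measure_Ioc_lt_top
  have hmem : MemLp f 2 μ :=
    (memLp_two_iff_integrable_sq h1'.aestronglyMeasurable).2 (by simpa [sq, IntegrableOn] using h2')
  have hone : MemLp (fun _ : ℝ => (1:ℝ)) 2 μ := memLp_const 1
  have hpq : (2:ℝ).HolderConjugate 2 := by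
    constructor <;> norm_num
  have key := MeasureTheory.integral_mul_norm_le_Lp_mul_Lq (μ := μ) hpq
    (by simpa using hmem) (by simpa using hone)
  simp only [norm_one, mul_one, one_pow] at key
  have habs : |∫ x, f x ∂μ| ≤ ∫ x, ‖f x‖ ∂μ := by
    simpa [Real.norm_eq_abs] using norm_integral_le_integral_norm (μ := μ) f
  have hμuniv : ∫ _x, (1:ℝ) ∂μ = b - a := by
    rw [integral_const, smul_eq_mul, mul_one, hμ, Measure.real, Measure.restrict_apply_univ,
      Real.volume_Ioc, ENNReal.toReal_ofReal (by linarith)]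
  have hsqnn : 0 ≤ ∫ x, ‖f x‖ ^ (2:ℝ) ∂μ :=
    integral_nonneg fun x => by positivity
  have h2eq : ∫ x, ‖f x‖ ^ (2:ℝ) ∂μ = ∫ x in a..b, f x ^ 2 := by
    rw [intervalIntegral.integral_of_le hab]
    apply integral_congr_ae
    filter_upwards with x
    rw [show ((2:ℝ)) = ((2:ℕ):ℝ) by norm_num, Real.rpow_natCast]
    simp [Real.norm_eq_abs, sq_abs]
  have hint_eq : ∫ x in a..b, f x = ∫ x, f x ∂μ := by
    rw [intervalIntegral.integral_of_le hab]
  rw [hint_eq, ← h2eq, ← sq_abs]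
  calc |∫ x, f x ∂μ| ^ 2 ≤ (∫ x, ‖f x‖ ∂μ) ^ 2 := by
        apply pow_le_pow_left₀ (abs_nonneg _) habs
    _ ≤ ((∫ x, ‖f x‖ ^ (2:ℝ) ∂μ) ^ (1/(2:ℝ)) * (∫ _x, (1:ℝ) ∂μ) ^ (1/(2:ℝ))) ^ 2 := by
        apply pow_le_pow_left₀ (integral_nonneg fun x => norm_nonneg _)
        convert key using 3
        · rfl
        norm_num
    _ = (b - a) * ∫ x, ‖f x‖ ^ (2:ℝ) ∂μ := by
        rw [hμuniv, mul_pow, ← Real.rpow_natCast _ 2, ← Real.rpow_natCast _ 2,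
          ← Real.rpow_mul hsqnn, ← Real.rpow_mul (by linarith)]
        norm_num [mul_comm]

/-- **Sup-norm Poincaré–Sobolev–Wirtinger inequality (Dirichlet version).**
Let `L > 0` and let `g : [0,L] → ℝ` be absolutely continuous with `g 0 = g L = 0`
(`g` is modelled as having derivative `g'` on `[0,L]`, with `g'` and `g'²` integrable).
Then `‖g‖_∞² ≤ (L/π) ∫₀ᴸ g'²`, i.e. `g(x)² ≤ (L/π) ∫₀ᴸ g'²` for every `x ∈ [0,L]`. -/
theorem psw_sup_dirichlet (L : ℝ) (hL : 0 < L) (g g' : ℝ → ℝ)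
    (hderiv : ∀ x ∈ Icc (0:ℝ) L, HasDerivWithinAt g (g' x) (Icc (0:ℝ) L) x)
    (hint : IntervalIntegrable g' volume 0 L)
    (hint2 : IntervalIntegrable (fun x => (g' x) ^ 2) volume 0 L)
    (h0 : g 0 = 0) (hLend : g L = 0) :
    ∀ x ∈ Icc (0:ℝ) L, (g x) ^ 2 ≤ L / Real.pi * ∫ x in (0:ℝ)..L, (g' x) ^ 2 := by
  intro x hx
  obtain ⟨hx0, hxL⟩ := hx
  have hcont : ContinuousOn g (Icc (0:ℝ) L) := fun y hy =>
    (hderiv y hy).continuousWithinAt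
  have hInn : 0 ≤ ∫ t in (0:ℝ)..L, (g' t) ^ 2 :=
    intervalIntegral.integral_nonneg (le_of_lt hL) fun t _ => sq_nonneg _
  -- It suffices to show g x ^ 2 ≤ L/4 * ∫
  have hL4 : (g x) ^ 2 ≤ L / 4 * ∫ t in (0:ℝ)..L, (g' t) ^ 2 := by
    -- FTC pieces
    have hderiv' : ∀ y ∈ Ioo (0:ℝ) L, HasDerivAt g (g' y) y := by
      intro y hy
      refine (hderiv y (Ioo_subset_Icc_self hy)).hasDerivAt ?_
      exact Filter.mem_of_superset (isOpen_Ioo.mem_nhds hy) Ioo_subset_Icc_self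
    have ftc1 : ∫ t in (0:ℝ)..x, g' t = g x := by
      rw [intervalIntegral.integral_eq_sub_of_hasDeriv_right_of_le hx0
        (hcont.mono (Icc_subset_Icc le_rfl hxL))
        (fun y hy => ((hderiv' y (Ioo_subset_Ioo le_rfl hxL hy)).hasDerivWithinAt))
        (hint.mono_set (by rw [uIcc_of_le hx0, uIcc_of_le hL.le]; exact Icc_subset_Icc le_rfl hxL)),
        h0, sub_zero]
    have ftc2 : ∫ t in x..L, g' t = - g x := by
      rw [intervalIntegral.integral_eq_sub_of_hasDeriv_right_of_le hxL
        (hcont.mono (Icc_subset_Icc hx0 le_rfl))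
        (fun y hy => ((hderiv' y (Ioo_subset_Ioo hx0 le_rfl hy)).hasDerivWithinAt))
        (hint.mono_set (by rw [uIcc_of_le hxL, uIcc_of_le hL.le]; exact Icc_subset_Icc hx0 le_rfl)),
        hLend, zero_sub]
    set A := ∫ t in (0:ℝ)..x, (g' t) ^ 2 with hA
    set B := ∫ t in x..L, (g' t) ^ 2 with hB
    have hintA : IntervalIntegrable g' volume 0 x :=
      hint.mono_set (by rw [uIcc_of_le hx0, uIcc_of_le hL.le]; exact Icc_subset_Icc le_rfl hxL)
    have hintB : IntervalIntegrable g' volume x L :=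
      hint.mono_set (by rw [uIcc_of_le hxL, uIcc_of_le hL.le]; exact Icc_subset_Icc hx0 le_rfl)
    have hint2A : IntervalIntegrable (fun t => (g' t) ^ 2) volume 0 x :=
      hint2.mono_set (by rw [uIcc_of_le hx0, uIcc_of_le hL.le]; exact Icc_subset_Icc le_rfl hxL)
    have hint2B : IntervalIntegrable (fun t => (g' t) ^ 2) volume x L :=
      hint2.mono_set (by rw [uIcc_of_le hxL, uIcc_of_le hL.le]; exact Icc_subset_Icc hx0 le_rfl)
    have hAB : A + B = ∫ t in (0:ℝ)..L, (g' t) ^ 2 :=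
      intervalIntegral.integral_add_adjacent_intervals hint2A hint2B
    have hAnn : 0 ≤ A := intervalIntegral.integral_nonneg hx0 fun t _ => sq_nonneg _
    have hBnn : 0 ≤ B := intervalIntegral.integral_nonneg hxL fun t _ => sq_nonneg _
    have cs1 : (g x) ^ 2 ≤ x * A := by
      have := cs_interval 0 x hx0 g' hintA hint2A
      rwa [ftc1, sub_zero] at this
    have cs2 : (g x) ^ 2 ≤ (L - x) * B := by
      have h := cs_interval x L hxL g' hintB hint2B
      rw [ftc2] at h
      calc (g x) ^ 2 = (-g x) ^ 2 := by ring
        _ ≤ (L - x) * B := h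
    -- Combine: L * g² = (L-x) g² + x g² ≤ (L-x)xA + x(L-x)B = x(L-x)(A+B) ≤ L²/4 (A+B)
    have combo : L * (g x) ^ 2 ≤ x * (L - x) * (A + B) := by
      have h1 : (L - x) * (g x) ^ 2 ≤ (L - x) * (x * A) :=
        mul_le_mul_of_nonneg_left cs1 (by linarith)
      have h2 : x * (g x) ^ 2 ≤ x * ((L - x) * B) :=
        mul_le_mul_of_nonneg_left cs2 hx0
      nlinarith
    have hq : x * (L - x) ≤ L ^ 2 / 4 := by nlinarith [sq_nonneg (L - 2 * x)]
    have : L * (g x) ^ 2 ≤ L ^ 2 / 4 * (A + B) := by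
      calc L * (g x) ^ 2 ≤ x * (L - x) * (A + B) := combo
        _ ≤ L ^ 2 / 4 * (A + B) :=
          mul_le_mul_of_nonneg_right hq (by linarith)
    rw [hAB] at this
    nlinarith [this, hL]
  calc (g x) ^ 2 ≤ L / 4 * ∫ t in (0:ℝ)..L, (g' t) ^ 2 := hL4
    _ ≤ L / Real.pi * ∫ t in (0:ℝ)..L, (g' t) ^ 2 := by
        apply mul_le_mul_of_nonneg_right _ hInn
        apply div_le_div_of_nonneg_left (le_of_lt hL) Real.pi_pos
        linarith [Real.pi_lt_d2]
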